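/- Let n ≥ 1 and let σ be a permutation of {1,…,n}. If u and v are two words over the alphabet {T_1,…,T_{n−1}} that both evaluate to σ and both have minimal length among all words evaluating to σ, then u ≡ v, where ≡ is the smallest congruence on words (i.e., the smallest equivalence relation compatible with concatenation on both sides) containing the braid relations T_i T_{i+1} T_i ≡ T_{i+1} T_i T_{i+1} for 1 ≤ i ≤ n−2 and the commutation relations T_i T_j ≡ T_j T_i for |i − j| ≥ 2. -/

import Mathlib

/-- Evaluation of a word over the alphabet `{T_1, …}` (a letter `j` stands
for the adjacent transposition `τ_j = (j, j+1)`), acting on the right: the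
first letter of the word acts first, so `k · (T_j :: w) = (k · T_j) · w`. -/
def wordEval : List ℕ → Equiv.Perm ℕ
  | [] => 1
  | j :: w => wordEval w * Equiv.swap j (j + 1)

/-- The smallest congruence on words over `{T_1,…,T_{n-1}}` (i.e. the smallest
equivalence relation compatible with concatenation on both sides) containing
the braid relations `T_i T_{i+1} T_i ≡ T_{i+1} T_i T_{i+1}` for `1 ≤ i ≤ n-2`
and the commutation relations `T_i T_j ≡ T_j T_i` for `|i - j| ≥ 2`. -/
inductive BraidCongr (n : ℕ) : List ℕ → List ℕ → Prop where
  | braid (i : ℕ) (h1 : 1 ≤ i) (h2 : i ≤ n - 2) :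
      BraidCongr n [i, i + 1, i] [i + 1, i, i + 1]
  | comm (i j : ℕ) (hi : i ∈ Finset.Icc 1 (n - 1)) (hj : j ∈ Finset.Icc 1 (n - 1))
      (h : i + 2 ≤ j ∨ j + 2 ≤ i) : BraidCongr n [i, j] [j, i]
  | refl (u : List ℕ) : BraidCongr n u u
  | symm {u v : List ℕ} : BraidCongr n u v → BraidCongr n v u
  | trans {u v w : List ℕ} : BraidCongr n u v → BraidCongr n v w → BraidCongr n u w
  | append {u v w x : List ℕ} :
      BraidCongr n u v → BraidCongr n w x → BraidCongr n (u ++ w) (v ++ x)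





/-- The set of inversions of `σ` inside `{1,…,n}`. -/
def InvSet (n : ℕ) (σ : Equiv.Perm ℕ) : Finset (ℕ × ℕ) :=
  ((Finset.Icc 1 n) ×ˢ (Finset.Icc 1 n)).filter fun p => p.1 < p.2 ∧ σ p.2 < σ p.1

/-- The number of inversions. -/
def invNum (n : ℕ) (σ : Equiv.Perm ℕ) : ℕ := (InvSet n σ).card

lemma mem_InvSet {n : ℕ} {σ : Equiv.Perm ℕ} {p : ℕ × ℕ} :
    p ∈ InvSet n σ ↔ (1 ≤ p.1 ∧ p.1 ≤ n) ∧ (1 ≤ p.2 ∧ p.2 ≤ n) ∧ p.1 < p.2 ∧ σ p.2 < σ p.1 := by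
  simp [InvSet, Finset.mem_filter, Finset.mem_product, and_assoc]

lemma mem_InvSet' {n : ℕ} {σ : Equiv.Perm ℕ} {a b : ℕ} :
    (a, b) ∈ InvSet n σ ↔ (1 ≤ a ∧ a ≤ n) ∧ (1 ≤ b ∧ b ≤ n) ∧ a < b ∧ σ b < σ a :=
  mem_InvSet

lemma swap_sorted {j x y : ℕ} (hxy : x < y) (hne : ¬(x = j ∧ y = j + 1)) :
    Equiv.swap j (j+1) x < Equiv.swap j (j+1) y := by
  rw [Equiv.swap_apply_def, Equiv.swap_apply_def]
  split_ifs <;> omega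

lemma swap_mem_Icc {n j x : ℕ} (hj1 : 1 ≤ j) (hj2 : j + 1 ≤ n) (hx1 : 1 ≤ x) (hx2 : x ≤ n) :
    1 ≤ Equiv.swap j (j+1) x ∧ Equiv.swap j (j+1) x ≤ n := by
  rw [Equiv.swap_apply_def]; split_ifs <;> omega

/-- Ascent step: right multiplication by an adjacent transposition at an ascent
increases the inversion number by one. -/
lemma invNum_step_ascent {n j : ℕ} (hj1 : 1 ≤ j) (hj2 : j + 1 ≤ n) (σ : Equiv.Perm ℕ)
    (h : σ j < σ (j+1)) :
    invNum n (σ * Equiv.swap j (j+1)) = invNum n σ + 1 := by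
  set s := Equiv.swap j (j+1) with hs
  have hp0B : (j, j+1) ∈ InvSet n (σ * s) := by
    rw [mem_InvSet]
    refine ⟨⟨hj1, by omega⟩, ⟨by omega, hj2⟩, by omega, ?_⟩
    simp only [Equiv.Perm.mul_apply, hs, Equiv.swap_apply_left, Equiv.swap_apply_right]
    exact h
  have hp0A : (j, j+1) ∉ InvSet n σ := by
    intro hmem
    rw [mem_InvSet] at hmem
    exact absurd (show σ (j+1) < σ j from hmem.2.2.2) (by omega)
  have hcard : ((InvSet n (σ * s)).erase (j, j+1)).card = (InvSet n σ).card := by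
    apply Finset.card_bij' (i := fun p _ => (s p.1, s p.2)) (j := fun p _ => (s p.1, s p.2))
    · intro p hp
      rw [Finset.mem_erase, mem_InvSet] at hp
      obtain ⟨hne, h1, h2, h3, h4⟩ := hp
      have hne' : ¬(p.1 = j ∧ p.2 = j + 1) := by
        intro ⟨e1, e2⟩; exact hne (by rw [Prod.ext_iff]; exact ⟨e1, e2⟩)
      rw [mem_InvSet]
      refine ⟨swap_mem_Icc hj1 hj2 h1.1 h1.2, swap_mem_Icc hj1 hj2 h2.1 h2.2,
        swap_sorted h3 hne', ?_⟩
      simpa [Equiv.Perm.mul_apply] using h4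
    · intro p hp
      rw [mem_InvSet] at hp
      obtain ⟨h1, h2, h3, h4⟩ := hp
      have hne' : ¬(p.1 = j ∧ p.2 = j + 1) := by
        rintro ⟨e1, e2⟩
        apply hp0A
        rw [mem_InvSet]
        refine ⟨⟨hj1, by omega⟩, ⟨by omega, hj2⟩, by omega, ?_⟩
        show σ (j+1) < σ j
        rw [e1, e2] at h4; exact h4
      rw [Finset.mem_erase, mem_InvSet]
      refine ⟨?_, swap_mem_Icc hj1 hj2 h1.1 h1.2, swap_mem_Icc hj1 hj2 h2.1 h2.2,
        swap_sorted h3 hne', ?_⟩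
      · intro he
        have e1 : s p.1 = j := congrArg Prod.fst he
        have e2 : s p.2 = j + 1 := congrArg Prod.snd he
        have f1 : p.1 = s j := by rw [← e1]; simp [hs]
        have f2 : p.2 = s (j+1) := by rw [← e2]; simp [hs]
        rw [hs, Equiv.swap_apply_left] at f1
        rw [hs, Equiv.swap_apply_right] at f2
        omega
      · simpa [hs, Equiv.Perm.mul_apply] using h4
    · intro p _; simp [hs]
    · intro p _; simp [hs]
  have : invNum n (σ * s) = ((InvSet n (σ * s)).erase (j, j+1)).card + 1 := by
    rw [invNum, ← Finset.card_erase_add_one hp0B]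
  rw [this, hcard, invNum]

/-- Descent step. -/
lemma invNum_step_descent {n j : ℕ} (hj1 : 1 ≤ j) (hj2 : j + 1 ≤ n) (σ : Equiv.Perm ℕ)
    (h : σ (j+1) < σ j) :
    invNum n σ = invNum n (σ * Equiv.swap j (j+1)) + 1 := by
  have := invNum_step_ascent hj1 hj2 (σ * Equiv.swap j (j+1)) (by
    simp [Equiv.Perm.mul_apply, Equiv.swap_apply_left, Equiv.swap_apply_right, h])
  rwa [mul_assoc, Equiv.swap_mul_self, mul_one] at this

/-- `σ` fixes everything outside `{1,…,n}`. -/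
def FixesOutside (n : ℕ) (σ : Equiv.Perm ℕ) : Prop :=
  ∀ x, x < 1 ∨ n < x → σ x = x

lemma fixesOutside_one (n : ℕ) : FixesOutside n 1 := fun x _ => rfl

lemma fixesOutside_mul {n : ℕ} {σ τ : Equiv.Perm ℕ} (hσ : FixesOutside n σ)
    (hτ : FixesOutside n τ) : FixesOutside n (σ * τ) := by
  intro x hx
  rw [Equiv.Perm.mul_apply, hτ x hx, hσ x hx]

lemma fixesOutside_swap {n j : ℕ} (hj1 : 1 ≤ j) (hj2 : j + 1 ≤ n) :
    FixesOutside n (Equiv.swap j (j+1)) := by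
  intro x hx
  apply Equiv.swap_apply_of_ne_of_ne <;> omega

lemma fixesOutside_wordEval {n : ℕ} {w : List ℕ}
    (hw : ∀ j ∈ w, j ∈ Finset.Icc 1 (n - 1)) (hn : 1 ≤ n) :
    FixesOutside n (wordEval w) := by
  induction w with
  | nil => exact fixesOutside_one n
  | cons a t ih =>
    have ha := hw a (List.mem_cons_self)
    rw [Finset.mem_Icc] at ha
    exact fixesOutside_mul (ih fun j hj => hw j (List.mem_cons_of_mem a hj))
      (fixesOutside_swap ha.1 (by omega))

/-- a permutation fixing the outside maps `{1,…,n}` into itself. -/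
lemma mapsIcc {n : ℕ} {σ : Equiv.Perm ℕ} (hσ : FixesOutside n σ) {x : ℕ}
    (hx1 : 1 ≤ x) (hx2 : x ≤ n) : 1 ≤ σ x ∧ σ x ≤ n := by
  by_contra hc
  push_neg at hc
  have hout : σ x < 1 ∨ n < σ x := by
    by_cases h1 : 1 ≤ σ x
    · right; exact hc h1
    · left; omega
  have := hσ (σ x) hout
  have := σ.injective this
  omega

lemma wordEval_append (u w : List ℕ) : wordEval (u ++ w) = wordEval w * wordEval u := by
  induction u with
  | nil => simp [wordEval]
  | cons a t ih => simp [wordEval, ih, mul_assoc]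

/-- lower bound: every word has length at least the inversion number of its evaluation -/
lemma invNum_le_length {n : ℕ} (hn : 1 ≤ n) (w : List ℕ)
    (hw : ∀ j ∈ w, j ∈ Finset.Icc 1 (n - 1)) :
    invNum n (wordEval w) ≤ w.length := by
  induction w with
  | nil =>
    have : invNum n (1 : Equiv.Perm ℕ) = 0 := by
      rw [invNum, Finset.card_eq_zero, Finset.eq_empty_iff_forall_notMem]
      intro p hp
      rw [mem_InvSet] at hp
      obtain ⟨_, _, h3, h4⟩ := hp
      simp only [Equiv.Perm.one_apply] at h4
      omega
    simp [wordEval, this]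
  | cons a t ih =>
    have ha := hw a (List.mem_cons_self)
    rw [Finset.mem_Icc] at ha
    have ha2 : a + 1 ≤ n := by omega
    have iht := ih fun j hj => hw j (List.mem_cons_of_mem a hj)
    set τ := wordEval t
    rcases lt_trichotomy (τ a) (τ (a+1)) with hlt | heq | hgt
    · have := invNum_step_ascent ha.1 ha2 τ hlt
      show invNum n (τ * _) ≤ t.length + 1
      omega
    · exact absurd (τ.injective heq) (by omega)
    · have := invNum_step_descent ha.1 ha2 τ hgt
      show invNum n (τ * _) ≤ t.length + 1
      omega

/-- chain strict monotonicity from consecutive comparisons -/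
lemma strictmono_chain {n : ℕ} {σ : Equiv.Perm ℕ}
    (h : ∀ j, 1 ≤ j → j + 1 ≤ n → σ j < σ (j + 1)) :
    ∀ x y, 1 ≤ x → x < y → y ≤ n → σ x < σ y := by
  intro x y hx hxy hy
  induction y with
  | zero => omega
  | succ m ihm =>
    rcases Nat.lt_or_ge x m with hlt | hge
    · exact lt_trans (ihm (by omega) (by omega)) (h m (by omega) (by omega))
    · have : x = m := by omega
      subst this
      exact h x hx hy

/-- no inversions implies identity (given fixing the outside) -/
lemma eq_one_of_invNum_zero {n : ℕ} {σ : Equiv.Perm ℕ} (hσ : FixesOutside n σ)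
    (h : invNum n σ = 0) : σ = 1 := by
  have hmono : ∀ x y, 1 ≤ x → x < y → y ≤ n → σ x < σ y := by
    intro x y hx hxy hy
    have hne : σ x ≠ σ y := fun he => by have := σ.injective he; omega
    rcases Nat.lt_or_ge (σ x) (σ y) with h' | h'
    · exact h'
    · exfalso
      have : (x, y) ∈ InvSet n σ := by
        rw [mem_InvSet']
        exact ⟨⟨hx, by omega⟩, ⟨by omega, hy⟩, hxy, by omega⟩
      rw [invNum, Finset.card_eq_zero] at h
      simp [h] at this
  -- σ x ≥ x on Icc
  have hge : ∀ x, 1 ≤ x → x ≤ n → x ≤ σ x := by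
    intro x
    induction x with
    | zero => omega
    | succ m ihm =>
      intro _ hmn
      rcases Nat.eq_or_lt_of_le (show 1 ≤ m + 1 by omega) with h1 | h1
      · have : (1:ℕ) ≤ σ (m+1) := (mapsIcc hσ (by omega) hmn).1
        omega
      · have hm1 : 1 ≤ m := by omega
        have := ihm hm1 (by omega)
        have := hmono m (m+1) hm1 (by omega) hmn
        omega
  -- σ⁻¹ also monotone-ish: derive σ x ≤ x
  have hinvfix : FixesOutside n σ⁻¹ := by
    intro x hx
    have := hσ x hx
    calc σ⁻¹ x = σ⁻¹ (σ x) := by rw [this]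
    _ = x := σ.symm_apply_apply x
  have hle : ∀ x, 1 ≤ x → x ≤ n → σ x ≤ x := by
    intro x hx1 hx2
    obtain ⟨hs1, hs2⟩ := mapsIcc hσ hx1 hx2
    by_contra hc
    push_neg at hc
    -- x < σ x ; apply hmono to σ⁻¹ : ?
    have hginv : ∀ y, 1 ≤ y → y ≤ n → y ≤ σ⁻¹ y := by
      intro y
      induction y with
      | zero => omega
      | succ m ihm =>
        intro _ hmn
        rcases Nat.eq_or_lt_of_le (show 1 ≤ m + 1 by omega) with h1 | h1
        · have : (1:ℕ) ≤ σ⁻¹ (m+1) := (mapsIcc hinvfix (by omega) hmn).1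
          omega
        · have hm1 : 1 ≤ m := by omega
          have h2 := ihm hm1 (by omega)
          have h3 : σ⁻¹ m < σ⁻¹ (m+1) := by
            obtain ⟨ha1, ha2⟩ := mapsIcc hinvfix hm1 (by omega)
            obtain ⟨hb1, hb2⟩ := mapsIcc hinvfix (show 1 ≤ m+1 by omega) hmn
            have hne : σ⁻¹ m ≠ σ⁻¹ (m+1) := fun he => by
              have := σ⁻¹.injective he; omega
            rcases Nat.lt_or_ge (σ⁻¹ m) (σ⁻¹ (m+1)) with h' | h'
            · exact h'
            · exfalso
              have := hmono (σ⁻¹ (m+1)) (σ⁻¹ m) hb1 (by omega) ha2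
              rw [Equiv.Perm.inv_def, Equiv.apply_symm_apply, Equiv.apply_symm_apply] at this
              omega
          omega
    have := hginv (σ x) hs1 hs2
    rw [Equiv.Perm.inv_def, Equiv.symm_apply_apply] at this
    omega
  ext x
  simp only [Equiv.Perm.one_apply]
  rcases Nat.lt_or_ge x 1 with h1 | h1
  · exact hσ x (Or.inl h1)
  rcases Nat.lt_or_ge n x with h2 | h2
  · exact hσ x (Or.inr h2)
  · exact le_antisymm (hle x h1 h2) (hge x h1 h2)

/-- existence of a reduced word with letters in range -/
lemma exists_reduced_word {n : ℕ} (hn : 1 ≤ n) :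
    ∀ (k : ℕ) (σ : Equiv.Perm ℕ), FixesOutside n σ → invNum n σ = k →
    ∃ w : List ℕ, (∀ j ∈ w, j ∈ Finset.Icc 1 (n - 1)) ∧ wordEval w = σ ∧ w.length = k := by
  intro k
  induction k with
  | zero =>
    intro σ hσ h
    exact ⟨[], by simp, by rw [eq_one_of_invNum_zero hσ h]; rfl, rfl⟩
  | succ m ihm =>
    intro σ hσ h
    -- find a consecutive descent
    have hdesc : ∃ j, 1 ≤ j ∧ j + 1 ≤ n ∧ σ (j+1) < σ j := by
      by_contra hc
      push_neg at hc
      have hmono : ∀ j, 1 ≤ j → j + 1 ≤ n → σ j < σ (j+1) := by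
        intro j h1 h2
        have hne : σ j ≠ σ (j+1) := fun he => by have := σ.injective he; omega
        have := hc j h1 h2
        omega
      have : InvSet n σ = ∅ := by
        rw [Finset.eq_empty_iff_forall_notMem]
        intro p hp
        rw [mem_InvSet] at hp
        obtain ⟨h1, h2, h3, h4⟩ := hp
        have := strictmono_chain hmono p.1 p.2 h1.1 h3 h2.2
        omega
      rw [invNum, this] at h
      simp at h
    obtain ⟨j, hj1, hj2, hjd⟩ := hdesc
    have hstep := invNum_step_descent hj1 hj2 σ hjd
    have hfix : FixesOutside n (σ * Equiv.swap j (j+1)) :=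
      fixesOutside_mul hσ (fixesOutside_swap hj1 hj2)
    obtain ⟨w, hw1, hw2, hw3⟩ := ihm (σ * Equiv.swap j (j+1)) hfix (by omega)
    refine ⟨j :: w, ?_, ?_, by simp [hw3]⟩
    · intro i hi
      rcases List.mem_cons.mp hi with rfl | hi
      · rw [Finset.mem_Icc]; omega
      · exact hw1 i hi
    · show wordEval w * Equiv.swap j (j+1) = σ
      rw [hw2, mul_assoc, Equiv.swap_mul_self, mul_one]

/-- commuting swaps -/
lemma swap_commute {a b : ℕ} (h : a + 2 ≤ b ∨ b + 2 ≤ a) :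
    Equiv.swap a (a+1) * Equiv.swap b (b+1) = Equiv.swap b (b+1) * Equiv.swap a (a+1) := by
  ext x
  simp only [Equiv.Perm.mul_apply, Equiv.swap_apply_def]
  split_ifs <;> omega

set_option maxHeartbeats 2000000 in
/-- braid identity for adjacent swaps -/
lemma swap_braid (a : ℕ) :
    Equiv.swap a (a+1) * Equiv.swap (a+1) (a+1+1) * Equiv.swap a (a+1)
      = Equiv.swap (a+1) (a+1+1) * Equiv.swap a (a+1) * Equiv.swap (a+1) (a+1+1) := by
  ext x
  simp only [Equiv.Perm.mul_apply, Equiv.swap_apply_def]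
  split_ifs <;> omega

/-- peel the first letter of a reduced word -/
lemma reduced_cons {n : ℕ} {a : ℕ} {u' : List ℕ}
    (ha1 : 1 ≤ a) (ha2 : a + 1 ≤ n) (hn : 1 ≤ n)
    (hu' : ∀ j ∈ u', j ∈ Finset.Icc 1 (n-1))
    (hlen : (a :: u').length = invNum n (wordEval (a :: u'))) :
    wordEval (a::u') (a+1) < wordEval (a::u') a ∧
    wordEval u' = wordEval (a::u') * Equiv.swap a (a+1) ∧
    u'.length = invNum n (wordEval u') := by
  have heq : wordEval u' = wordEval (a::u') * Equiv.swap a (a+1) := by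
    show wordEval u' = wordEval u' * Equiv.swap a (a+1) * Equiv.swap a (a+1)
    rw [mul_assoc, Equiv.swap_mul_self, mul_one]
  have hlow : invNum n (wordEval u') ≤ u'.length := invNum_le_length hn u' hu'
  have hc : (a::u').length = u'.length + 1 := by simp
  set σ := wordEval (a::u') with hσ
  rcases lt_trichotomy (σ a) (σ (a+1)) with hlt | h0 | hgt
  · exfalso
    have hA := invNum_step_ascent ha1 ha2 σ hlt
    rw [← heq] at hA
    omega
  · exact absurd (σ.injective h0) (by omega)
  · have hst := invNum_step_descent ha1 ha2 σ hgt
    rw [← heq] at hst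
    exact ⟨hgt, heq, by omega⟩


set_option maxHeartbeats 1600000 in
/-- the braid (|a-b| = 1) case of the main induction -/
lemma braid_step (n : ℕ) (hn : 1 ≤ n) (m : ℕ)
    (ih : ∀ u v : List ℕ, u.length ≤ m →
      (∀ j ∈ u, j ∈ Finset.Icc 1 (n-1)) → (∀ j ∈ v, j ∈ Finset.Icc 1 (n-1)) →
      wordEval u = wordEval v → u.length = invNum n (wordEval u) →
      v.length = invNum n (wordEval v) → BraidCongr n u v)
    (a : ℕ) (u' v' : List ℕ)
    (ha : a ∈ Finset.Icc 1 (n-1)) (hb : a + 1 ∈ Finset.Icc 1 (n-1))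
    (hu' : ∀ j ∈ u', j ∈ Finset.Icc 1 (n-1)) (hv' : ∀ j ∈ v', j ∈ Finset.Icc 1 (n-1))
    (hLu : u'.length ≤ m) (hLv : v'.length ≤ m)
    (huv : wordEval (a :: u') = wordEval ((a+1) :: v'))
    (hru : (a::u').length = invNum n (wordEval (a::u')))
    (hrv : ((a+1)::v').length = invNum n (wordEval ((a+1)::v'))) :
    BraidCongr n (a :: u') ((a+1) :: v') := by
  rw [Finset.mem_Icc] at ha hb
  have ha2 : a + 1 ≤ n := by omega
  have hb2 : a + 1 + 1 ≤ n := by omega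
  obtain ⟨desc1, heu', hru'⟩ := reduced_cons ha.1 ha2 hn hu' hru
  obtain ⟨desc2, hev', hrv'⟩ := reduced_cons hb.1 hb2 hn hv' hrv
  rw [← huv] at desc2 hev'
  -- pointwise swap computations
  have tb_a : Equiv.swap (a+1) (a+1+1) a = a :=
    Equiv.swap_apply_of_ne_of_ne (by omega) (by omega)
  have ta_a2 : Equiv.swap a (a+1) (a+1+1) = a+1+1 :=
    Equiv.swap_apply_of_ne_of_ne (by omega) (by omega)
  have s1 : invNum n (wordEval (a::u')) =
      invNum n (wordEval (a::u') * Equiv.swap a (a+1)) + 1 :=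
    invNum_step_descent ha.1 ha2 _ desc1
  have descA : (wordEval (a::u') * Equiv.swap a (a+1)) (a+1+1) <
      (wordEval (a::u') * Equiv.swap a (a+1)) (a+1) := by
    simp only [Equiv.Perm.mul_apply]
    rw [Equiv.swap_apply_right, ta_a2]
    exact lt_trans desc2 desc1
  have s2 : invNum n (wordEval (a::u') * Equiv.swap a (a+1)) =
      invNum n (wordEval (a::u') * Equiv.swap a (a+1) * Equiv.swap (a+1) (a+1+1)) + 1 :=
    invNum_step_descent (by omega) hb2 _ descA
  have descB : (wordEval (a::u') * Equiv.swap a (a+1) * Equiv.swap (a+1) (a+1+1)) (a+1) <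
      (wordEval (a::u') * Equiv.swap a (a+1) * Equiv.swap (a+1) (a+1+1)) a := by
    simp only [Equiv.Perm.mul_apply]
    rw [tb_a, Equiv.swap_apply_left, Equiv.swap_apply_left, ta_a2]
    exact desc2
  have s3 : invNum n (wordEval (a::u') * Equiv.swap a (a+1) * Equiv.swap (a+1) (a+1+1)) =
      invNum n (wordEval (a::u') * Equiv.swap a (a+1) * Equiv.swap (a+1) (a+1+1) *
        Equiv.swap a (a+1)) + 1 :=
    invNum_step_descent ha.1 ha2 _ descB
  have hfixσ : FixesOutside n (wordEval (a::u')) := by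
    apply fixesOutside_wordEval ?_ hn
    intro j hj
    rcases List.mem_cons.mp hj with rfl | hj
    · rw [Finset.mem_Icc]; omega
    · exact hu' j hj
  have hfix3 : FixesOutside n (wordEval (a::u') * Equiv.swap a (a+1) *
      Equiv.swap (a+1) (a+1+1) * Equiv.swap a (a+1)) := by
    intro x hx
    have hx1 : Equiv.swap a (a+1) x = x :=
      Equiv.swap_apply_of_ne_of_ne (by omega) (by omega)
    have hx2 : Equiv.swap (a+1) (a+1+1) x = x :=
      Equiv.swap_apply_of_ne_of_ne (by omega) (by omega)
    simp only [Equiv.Perm.mul_apply]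
    rw [hx1, hx2, hx1]
    exact hfixσ x hx
  obtain ⟨w₁, hw1, hw2, hw3⟩ := exists_reduced_word hn _
    (wordEval (a::u') * Equiv.swap a (a+1) * Equiv.swap (a+1) (a+1+1) * Equiv.swap a (a+1))
    hfix3 rfl
  -- concrete swap identities
  have sms : ∀ (c d : ℕ) (e : Equiv.Perm ℕ), Equiv.swap c d * (Equiv.swap c d * e) = e := by
    intro c d e
    rw [← mul_assoc, Equiv.swap_mul_self, one_mul]
  have id1 : Equiv.swap a (a+1) * (Equiv.swap (a+1) (a+1+1) * (Equiv.swap a (a+1) *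
      (Equiv.swap a (a+1) * Equiv.swap (a+1) (a+1+1)))) = Equiv.swap a (a+1) := by
    rw [sms, Equiv.swap_mul_self, mul_one]
  have id2 : Equiv.swap a (a+1) * (Equiv.swap (a+1) (a+1+1) * (Equiv.swap a (a+1) *
      (Equiv.swap (a+1) (a+1+1) * Equiv.swap a (a+1)))) = Equiv.swap (a+1) (a+1+1) := by
    have hbr := swap_braid a
    calc Equiv.swap a (a+1) * (Equiv.swap (a+1) (a+1+1) * (Equiv.swap a (a+1) *
          (Equiv.swap (a+1) (a+1+1) * Equiv.swap a (a+1))))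
        = (Equiv.swap a (a+1) * Equiv.swap (a+1) (a+1+1) * Equiv.swap a (a+1)) *
          (Equiv.swap (a+1) (a+1+1) * Equiv.swap a (a+1)) := by simp only [mul_assoc]
      _ = (Equiv.swap (a+1) (a+1+1) * Equiv.swap a (a+1) * Equiv.swap (a+1) (a+1+1)) *
          (Equiv.swap (a+1) (a+1+1) * Equiv.swap a (a+1)) := by rw [hbr]
      _ = Equiv.swap (a+1) (a+1+1) * (Equiv.swap a (a+1) * (Equiv.swap (a+1) (a+1+1) *
          (Equiv.swap (a+1) (a+1+1) * Equiv.swap a (a+1)))) := by simp only [mul_assoc]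
      _ = Equiv.swap (a+1) (a+1+1) * (Equiv.swap a (a+1) * Equiv.swap a (a+1)) := by rw [sms]
      _ = Equiv.swap (a+1) (a+1+1) := by rw [Equiv.swap_mul_self, mul_one]
  -- first IH use
  have e1 : wordEval ((a+1) :: a :: w₁) = wordEval u' := by
    show wordEval w₁ * Equiv.swap a (a+1) * Equiv.swap (a+1) (a+1+1) = wordEval u'
    rw [hw2, heu']
    simp only [mul_assoc]
    rw [id1]
  have cong1 : BraidCongr n u' ((a+1) :: a :: w₁) := by
    apply ih u' ((a+1) :: a :: w₁) hLu hu' ?_ (by rw [e1]) hru' ?_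
    · intro j hj
      rcases List.mem_cons.mp hj with rfl | hj
      · rw [Finset.mem_Icc]; omega
      rcases List.mem_cons.mp hj with rfl | hj
      · rw [Finset.mem_Icc]; omega
      · exact hw1 j hj
    · rw [e1, heu']
      have hl : ((a+1) :: a :: w₁).length = w₁.length + 2 := by simp
      have hc : (a :: u').length = u'.length + 1 := by simp
      omega
  -- second IH use
  have e2 : wordEval (a :: (a+1) :: w₁) = wordEval v' := by
    show wordEval w₁ * Equiv.swap (a+1) (a+1+1) * Equiv.swap a (a+1) = wordEval v'
    rw [hw2, hev']
    simp only [mul_assoc]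
    rw [id2]
  have cong2 : BraidCongr n v' (a :: (a+1) :: w₁) := by
    apply ih v' (a :: (a+1) :: w₁) hLv hv' ?_ (by rw [e2]) hrv' ?_
    · intro j hj
      rcases List.mem_cons.mp hj with rfl | hj
      · rw [Finset.mem_Icc]; omega
      rcases List.mem_cons.mp hj with rfl | hj
      · rw [Finset.mem_Icc]; omega
      · exact hw1 j hj
    · rw [e2, hev']
      have h1 : (a :: (a+1) :: w₁).length = w₁.length + 2 := by simp
      have h2 : ((a+1)::v').length = v'.length + 1 := by simp
      rw [hev'] at hrv'
      rw [← huv] at hrv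
      omega
  -- assemble
  have g1 : BraidCongr n ([a] ++ u') ([a] ++ ((a+1) :: a :: w₁)) :=
    BraidCongr.append (BraidCongr.refl [a]) cong1
  have g2 : BraidCongr n ([a, a+1, a] ++ w₁) ([a+1, a, a+1] ++ w₁) :=
    BraidCongr.append (BraidCongr.braid a ha.1 (by omega)) (BraidCongr.refl w₁)
  have g3 : BraidCongr n ([a+1] ++ v') ([a+1] ++ (a :: (a+1) :: w₁)) :=
    BraidCongr.append (BraidCongr.refl [a+1]) cong2
  exact BraidCongr.trans (BraidCongr.trans g1 g2) (BraidCongr.symm g3)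


lemma invNum_one (n : ℕ) : invNum n 1 = 0 := by
  rw [invNum, Finset.card_eq_zero, Finset.eq_empty_iff_forall_notMem]
  intro p hp
  rw [mem_InvSet] at hp
  obtain ⟨_, _, h3, h4⟩ := hp
  simp only [Equiv.Perm.one_apply] at h4
  omega

set_option maxHeartbeats 1600000 in
/-- Matsumoto's theorem for the symmetric group: two reduced words with the
same evaluation are related by the braid congruence. -/
lemma reduced_congr (n : ℕ) (hn : 1 ≤ n) :
    ∀ (L : ℕ) (u v : List ℕ), u.length ≤ L →
      (∀ j ∈ u, j ∈ Finset.Icc 1 (n-1)) → (∀ j ∈ v, j ∈ Finset.Icc 1 (n-1)) →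
      wordEval u = wordEval v →
      u.length = invNum n (wordEval u) → v.length = invNum n (wordEval v) →
      BraidCongr n u v := by
  intro L
  induction L with
  | zero =>
    intro u v hL hu hv huv hru hrv
    have hu0 : u = [] := List.eq_nil_of_length_eq_zero (by omega)
    subst hu0
    have h1 : wordEval v = 1 := by rw [← huv]; rfl
    have hv0 : v.length = 0 := by rw [hrv, h1, invNum_one]
    rw [List.eq_nil_of_length_eq_zero hv0]
    exact BraidCongr.refl []
  | succ m ih =>
    intro u v hL hu hv huv hru hrv
    cases u with
    | nil =>
      have h1 : wordEval v = 1 := by rw [← huv]; rfl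
      have hv0 : v.length = 0 := by rw [hrv, h1, invNum_one]
      rw [List.eq_nil_of_length_eq_zero hv0]
      exact BraidCongr.refl []
    | cons a u' =>
      cases v with
      | nil =>
        exfalso
        have h1 : wordEval (a :: u') = 1 := by rw [huv]; rfl
        have h0 : (a :: u').length = 0 := by rw [hru, h1, invNum_one]
        simp at h0
      | cons b v' =>
        have ha := hu a (List.mem_cons_self)
        have hb := hv b (List.mem_cons_self)
        have hu'' : ∀ j ∈ u', j ∈ Finset.Icc 1 (n-1) :=
          fun j hj => hu j (List.mem_cons_of_mem a hj)
        have hv'' : ∀ j ∈ v', j ∈ Finset.Icc 1 (n-1) :=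
          fun j hj => hv j (List.mem_cons_of_mem b hj)
        have hcu : (a :: u').length = u'.length + 1 := by simp
        have hcv : (b :: v').length = v'.length + 1 := by simp
        have hlen : (a :: u').length = (b :: v').length := by
          rw [hru, hrv, huv]
        have hLu : u'.length ≤ m := by omega
        have hLv : v'.length ≤ m := by omega
        have ha' := Finset.mem_Icc.mp ha
        have hb' := Finset.mem_Icc.mp hb
        have ha2 : a + 1 ≤ n := by omega
        have hb2 : b + 1 ≤ n := by omega
        by_cases hab : a = b
        · subst hab
          obtain ⟨desc1, heu', hru'⟩ := reduced_cons ha'.1 ha2 hn hu'' hru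
          obtain ⟨desc2, hev', hrv'⟩ := reduced_cons ha'.1 ha2 hn hv'' hrv
          rw [← huv] at hev'
          have cong : BraidCongr n u' v' := by
            apply ih u' v' hLu hu'' hv'' (by rw [heu', hev']) hru' hrv'
          exact BraidCongr.append (BraidCongr.refl [a]) cong
        · rcases (show b = a + 1 ∨ a = b + 1 ∨ (a + 2 ≤ b ∨ b + 2 ≤ a) by omega) with
            hc | hc | hc
          · subst hc
            exact braid_step n hn m ih a u' v' ha hb hu'' hv'' hLu hLv huv hru hrv
          · subst hc
            exact BraidCongr.symm
              (braid_step n hn m ih b v' u' hb ha hv'' hu'' hLv hLu huv.symm hrv hru)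
          · -- commuting case
            obtain ⟨desc1, heu', hru'⟩ := reduced_cons ha'.1 ha2 hn hu'' hru
            obtain ⟨desc2, hev', hrv'⟩ := reduced_cons hb'.1 hb2 hn hv'' hrv
            rw [← huv] at desc2 hev'
            have ta_b : Equiv.swap a (a+1) b = b :=
              Equiv.swap_apply_of_ne_of_ne (by omega) (by omega)
            have ta_b1 : Equiv.swap a (a+1) (b+1) = b + 1 :=
              Equiv.swap_apply_of_ne_of_ne (by omega) (by omega)
            have s1 : invNum n (wordEval (a::u')) =
                invNum n (wordEval (a::u') * Equiv.swap a (a+1)) + 1 :=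
              invNum_step_descent ha'.1 ha2 _ desc1
            have descA : (wordEval (a::u') * Equiv.swap a (a+1)) (b+1) <
                (wordEval (a::u') * Equiv.swap a (a+1)) b := by
              simp only [Equiv.Perm.mul_apply]
              rw [ta_b, ta_b1]
              exact desc2
            have s2 : invNum n (wordEval (a::u') * Equiv.swap a (a+1)) =
                invNum n (wordEval (a::u') * Equiv.swap a (a+1) * Equiv.swap b (b+1)) + 1 :=
              invNum_step_descent hb'.1 hb2 _ descA
            have hfixσ : FixesOutside n (wordEval (a::u')) := fixesOutside_wordEval hu hn
            have hfix2 : FixesOutside n (wordEval (a::u') * Equiv.swap a (a+1) *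
                Equiv.swap b (b+1)) := by
              intro x hx
              have hx1 : Equiv.swap a (a+1) x = x :=
                Equiv.swap_apply_of_ne_of_ne (by omega) (by omega)
              have hx2 : Equiv.swap b (b+1) x = x :=
                Equiv.swap_apply_of_ne_of_ne (by omega) (by omega)
              simp only [Equiv.Perm.mul_apply]
              rw [hx2, hx1]
              exact hfixσ x hx
            obtain ⟨w₁, hw1, hw2, hw3⟩ := exists_reduced_word hn _
              (wordEval (a::u') * Equiv.swap a (a+1) * Equiv.swap b (b+1)) hfix2 rfl
            have idc : Equiv.swap a (a+1) * Equiv.swap b (b+1)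
                = Equiv.swap b (b+1) * Equiv.swap a (a+1) := swap_commute hc
            have e1 : wordEval (b :: w₁) = wordEval u' := by
              show wordEval w₁ * Equiv.swap b (b+1) = wordEval u'
              rw [hw2, heu', mul_assoc, Equiv.swap_mul_self, mul_one]
            have cong1 : BraidCongr n u' (b :: w₁) := by
              apply ih u' (b :: w₁) hLu hu'' ?_ (by rw [e1]) hru' ?_
              · intro j hj
                rcases List.mem_cons.mp hj with rfl | hj
                · exact hb
                · exact hw1 j hj
              · rw [e1, heu']
                have hl : (b :: w₁).length = w₁.length + 1 := by simp
                omega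
            have e2 : wordEval (a :: w₁) = wordEval v' := by
              show wordEval w₁ * Equiv.swap a (a+1) = wordEval v'
              rw [hw2, hev', mul_assoc (wordEval (a::u')) (Equiv.swap a (a+1)), idc]
              simp only [mul_assoc]
              rw [show Equiv.swap a (a+1) * Equiv.swap a (a+1) = 1 from Equiv.swap_mul_self _ _,
                mul_one]
            have cong2 : BraidCongr n v' (a :: w₁) := by
              apply ih v' (a :: w₁) hLv hv'' ?_ (by rw [e2]) hrv' ?_
              · intro j hj
                rcases List.mem_cons.mp hj with rfl | hj
                · exact ha
                · exact hw1 j hj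
              · rw [e2, hev']
                rw [hev'] at hrv'
                rw [← huv] at hrv
                have hl : (a :: w₁).length = w₁.length + 1 := by simp
                omega
            have g1 : BraidCongr n ([a] ++ u') ([a] ++ (b :: w₁)) :=
              BraidCongr.append (BraidCongr.refl [a]) cong1
            have g2 : BraidCongr n ([a, b] ++ w₁) ([b, a] ++ w₁) :=
              BraidCongr.append (BraidCongr.comm a b ha hb hc) (BraidCongr.refl w₁)
            have g3 : BraidCongr n ([b] ++ v') ([b] ++ (a :: w₁)) :=
              BraidCongr.append (BraidCongr.refl [b]) cong2
            exact BraidCongr.trans (BraidCongr.trans g1 g2) (BraidCongr.symm g3)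


/-- if `u` and `v` are two words over `{T_1,…,T_{n-1}}` that
evaluate to the same permutation of `{1,…,n}` and both have minimal length
among all words with that evaluation, then `u ≡ v` for the congruence
generated by the braid and commutation relations. -/
theorem stmt11 (n : ℕ) (hn : 1 ≤ n) (u v : List ℕ)
    (hu : ∀ j ∈ u, j ∈ Finset.Icc 1 (n - 1))
    (hv : ∀ j ∈ v, j ∈ Finset.Icc 1 (n - 1))
    (huv : wordEval u = wordEval v)
    (hminu : ∀ w : List ℕ, (∀ j ∈ w, j ∈ Finset.Icc 1 (n - 1)) →
      wordEval w = wordEval u → u.length ≤ w.length)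
    (hminv : ∀ w : List ℕ, (∀ j ∈ w, j ∈ Finset.Icc 1 (n - 1)) →
      wordEval w = wordEval v → v.length ≤ w.length) :
    BraidCongr n u v := by
  obtain ⟨w₀, hw1, hw2, hw3⟩ := exists_reduced_word hn (invNum n (wordEval u)) (wordEval u)
    (fixesOutside_wordEval hu hn) rfl
  have h1 : u.length ≤ invNum n (wordEval u) := by
    have := hminu w₀ hw1 hw2
    omega
  have h2 : invNum n (wordEval u) ≤ u.length := invNum_le_length hn u hu
  have h3 : v.length ≤ invNum n (wordEval v) := by
    have := hminv w₀ hw1 (by rw [hw2, huv])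
    rw [← huv]
    omega
  have h4 : invNum n (wordEval v) ≤ v.length := invNum_le_length hn v hv
  exact reduced_congr n hn u.length u v le_rfl hu hv huv (by omega) (by omega)
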